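/- arXiv:2412.14463 — 3 statements merged into one kernel-verified Lean document; each statement's English description precedes it below -/
import Mathlib

section
/- Let a : ℤ → ℝ with aₙ > 0 for all n, let b : ℤ → ℝ, and let λ₀ < λ₁ be real numbers. Suppose there exist u, v : ℤ → ℝ such that for all n ∈ ℤ: aₙ₊₁uₙ₊₁ + aₙuₙ₋₁ + bₙuₙ = λ₁uₙ with uₙ > 0, and aₙ₊₁vₙ₊₁ + aₙvₙ₋₁ + bₙvₙ = λ₀vₙ with (−1)ⁿvₙ > 0. Then for every finitely supported function f : ℤ → ℝ one has λ₀·Σₙ fₙ² ≤ Σₙ fₙ·(aₙ₊₁fₙ₊₁ + aₙfₙ₋₁ + bₙfₙ) ≤ λ₁·Σₙ fₙ². -/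
open Function

lemma key_lemma (a b : ℤ → ℝ) (ha : ∀ n, 0 < a n) (lam ε : ℝ) (hε : ε = 1 ∨ ε = -1)
    (c : ℤ → ℝ) (hc : ∀ n, 0 < c n)
    (hch : ∀ n : ℤ, ε * (a (n + 1) * c (n + 1) + a n * c (n - 1)) + b n * c n = lam * c n)
    (f : ℤ → ℝ) (hf : (Function.support f).Finite) :
    0 ≤ ε * (lam * ∑ᶠ n : ℤ, (f n) ^ 2 -
      ∑ᶠ n : ℤ, f n * (a (n + 1) * f (n + 1) + a n * f (n - 1) + b n * f n)) := by
  set p : ℤ → ℝ := fun n => lam * (f n) ^ 2 with hp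
  set g : ℤ → ℝ := fun n => ε * (a n * c n / c (n - 1)) * (f (n - 1)) ^ 2
      - a n * f n * f (n - 1) with hg
  set h : ℤ → ℝ := fun n => ε * (a n * c (n - 1) / c n) * (f n) ^ 2
      - a n * f n * f (n - 1) with hh
  set k : ℤ → ℝ := fun n => (a n / (c n * c (n - 1))) *
      (c n * f (n - 1) - ε * c (n - 1) * f n) ^ 2 with hk
  have hcne : ∀ n, c n ≠ 0 := fun n => (hc n).ne'
  -- supports
  have hsp : (support p).Finite := by
    apply hf.subset
    intro n hn
    simp only [hp, mem_support] at hn ⊢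
    intro hfn; apply hn; rw [hfn]; ring
  have hsg : (support g).Finite := by
    apply (hf.image (fun n => n + 1)).subset
    intro n hn
    simp only [hg, mem_support] at hn
    have : f (n - 1) ≠ 0 := by
      intro h0; apply hn; rw [h0]; ring
    exact ⟨n - 1, this, by ring⟩
  have hsgs : (support fun n => g (n + 1)).Finite := by
    apply hf.subset
    intro n hn
    simp only [hg, mem_support, add_sub_cancel_right] at hn
    intro h0; apply hn; rw [h0]; ring
  have hsh : (support h).Finite := by
    apply hf.subset
    intro n hn
    simp only [hh, mem_support] at hn
    intro h0; apply hn; rw [h0]; ring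
  -- pointwise identity 1
  have hpt1 : ∀ n : ℤ, f n * (a (n + 1) * f (n + 1) + a n * f (n - 1) + b n * f n)
      = p n - (g (n + 1) + h n) := by
    intro n
    have hb : b n * c n = lam * c n - ε * (a (n + 1) * c (n + 1) + a n * c (n - 1)) := by
      linarith [hch n]
    have hb' : b n = (lam * c n - ε * (a (n + 1) * c (n + 1) + a n * c (n - 1))) / c n := by
      rw [eq_div_iff (hcne n)]
      linarith [hch n]
    have h1 := hcne n; have h2 := hcne (n - 1); have h3 := hcne (n + 1)
    simp only [hp, hg, hh, add_sub_cancel_right, hb']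
    field_simp
    ring
  -- pointwise identity 2
  have hpt2 : ∀ n : ℤ, g n + h n = ε * k n := by
    intro n
    rcases hε with rfl | rfl <;>
    · simp only [hg, hh, hk]
      generalize a n = A
      generalize hB : c n = B
      generalize hC : c (n - 1) = C
      have h1 : B ≠ 0 := hB ▸ hcne n
      have h2 : C ≠ 0 := hC ▸ hcne (n - 1)
      field_simp
      ring
  -- the sum rewrite
  have hQ : (∑ᶠ n : ℤ, f n * (a (n + 1) * f (n + 1) + a n * f (n - 1) + b n * f n))
      = (∑ᶠ n, p n) - ((∑ᶠ n, g n) + ∑ᶠ n, h n) := by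
    have hshift : (∑ᶠ i : ℤ, g (i + 1)) = ∑ᶠ i, g i := by
      simpa using finsum_comp_equiv (Equiv.addRight (1 : ℤ)) (f := g)
    rw [finsum_congr hpt1, finsum_sub_distrib hsp (hsgs.union hsh |>.subset ?_),
      finsum_add_distrib hsgs hsh, hshift]
    · intro n hn
      simp only [mem_support] at hn
      by_contra hcon
      simp only [Set.mem_union, mem_support, not_or, not_not] at hcon
      exact hn (by rw [hcon.1, hcon.2]; ring)
  have hlamsum : lam * ∑ᶠ n : ℤ, (f n) ^ 2 = ∑ᶠ n, p n := by
    rw [mul_finsum]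
  have hgk : (∑ᶠ n, g n) + (∑ᶠ n, h n) = ε * ∑ᶠ n, k n := by
    have hsk : (support k).Finite := by
      apply (hsg.union hsh).subset
      intro n hn
      by_contra hcon
      simp only [Set.mem_union, mem_support, not_or, not_not] at hcon
      simp only [mem_support] at hn
      have h0 : ε * k n = 0 := by rw [← hpt2 n, hcon.1, hcon.2]; ring
      apply hn
      rcases hε with rfl | rfl <;> linarith
    rw [← finsum_add_distrib hsg hsh, finsum_congr hpt2]
    exact (mul_finsum k ε).symm
  have hknn : 0 ≤ ∑ᶠ n, k n := by
    apply finsum_nonneg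
    intro n
    simp only [hk]
    exact mul_nonneg (div_pos (ha n) (mul_pos (hc n) (hc (n - 1)))).le (sq_nonneg _)
  have hε2 : ε * ε = 1 := by rcases hε with rfl | rfl <;> norm_num
  calc (0:ℝ) ≤ ε * ε * ∑ᶠ n, k n := by rw [hε2]; simpa using hknn
    _ = ε * (lam * ∑ᶠ n : ℤ, (f n) ^ 2 -
      ∑ᶠ n : ℤ, f n * (a (n + 1) * f (n + 1) + a n * f (n - 1) + b n * f n)) := by
        rw [hQ, hlamsum, hgk]; ring

/-- If the Jacobi difference equation `H_q w = λ w` admits a positive solution at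
`λ = λ₁` and a sign-alternating solution at `λ = λ₀`, then the quadratic form of
`H_q` on finitely supported sequences is bounded between `λ₀` and `λ₁`. -/
theorem stmt3 (a b : ℤ → ℝ) (ha : ∀ n, 0 < a n) (lam0 lam1 : ℝ) (hlt : lam0 < lam1)
    (u v : ℤ → ℝ)
    (hupos : ∀ n, 0 < u n)
    (hu : ∀ n : ℤ, a (n + 1) * u (n + 1) + a n * u (n - 1) + b n * u n = lam1 * u n)
    (hvalt : ∀ n : ℤ, 0 < (-1 : ℝ) ^ n * v n)
    (hv : ∀ n : ℤ, a (n + 1) * v (n + 1) + a n * v (n - 1) + b n * v n = lam0 * v n)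
    (f : ℤ → ℝ) (hf : (Function.support f).Finite) :
    lam0 * ∑ᶠ n : ℤ, (f n) ^ 2 ≤
        (∑ᶠ n : ℤ, f n * (a (n + 1) * f (n + 1) + a n * f (n - 1) + b n * f n)) ∧
      (∑ᶠ n : ℤ, f n * (a (n + 1) * f (n + 1) + a n * f (n - 1) + b n * f n)) ≤
        lam1 * ∑ᶠ n : ℤ, (f n) ^ 2 := by
  constructor
  · -- lower bound, using the alternating solution `v`
    set w : ℤ → ℝ := fun n => (-1 : ℝ) ^ n * v n with hwdef
    have hpow : ∀ m : ℤ, ((-1 : ℝ)) ^ (m + 1) = -((-1 : ℝ)) ^ m := by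
      intro m
      rw [zpow_add_one₀ (by norm_num : (-1 : ℝ) ≠ 0)]
      ring
    have hw : ∀ n : ℤ, (-1 : ℝ) * (a (n + 1) * w (n + 1) + a n * w (n - 1)) + b n * w n
        = lam0 * w n := by
      intro n
      have h1 : w (n + 1) = -((-1 : ℝ) ^ n * v (n + 1)) := by
        simp only [hwdef, hpow n]; ring
      have h2 : w (n - 1) = -((-1 : ℝ) ^ n * v (n - 1)) := by
        have := hpow (n - 1)
        simp only [sub_add_cancel] at this
        simp only [hwdef, this]; ring
      rw [h1, h2]
      simp only [hwdef]
      linear_combination ((-1 : ℝ) ^ n) * hv n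
    have := key_lemma a b ha lam0 (-1) (Or.inr rfl) w hvalt hw f hf
    linarith
  · -- upper bound, using the positive solution `u`
    have hu' : ∀ n : ℤ, (1 : ℝ) * (a (n + 1) * u (n + 1) + a n * u (n - 1)) + b n * u n
        = lam1 * u n := by
      intro n
      rw [one_mul]
      exact hu n
    have := key_lemma a b ha lam1 1 (Or.inl rfl) u hupos hu' f hf
    linarith
end

section
/- Let a : ℤ → ℝ with aₙ > 0 for all n, let b : ℤ → ℝ, let λ₁ ∈ ℝ, and let u : ℤ → ℝ satisfy uₙ > 0 and aₙ₊₁uₙ₊₁ + aₙuₙ₋₁ + bₙuₙ = λ₁uₙ for all n ∈ ℤ. Define φₙ = uₙ₊₁/uₙ, ρ_o(n) = −√(aₙ₊₁/φₙ), ρ_e(n) = √(aₙ₊₁·φₙ), and for f : ℤ → ℝ set (Af)ₙ = ρ_o(n)fₙ₊₁ + ρ_e(n)fₙ and (A*f)ₙ = ρ_o(n−1)fₙ₋₁ + ρ_e(n)fₙ. Then for every f : ℤ → ℝ and every n ∈ ℤ one has (A*(Af))ₙ = λ₁fₙ − (aₙ₊₁fₙ₊₁ + aₙfₙ₋₁ +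 bₙfₙ). -/
/-- `φₙ = uₙ₊₁/uₙ` built from a positive solution `u` of the Jacobi equation. -/
noncomputable def phiRatio (u : ℤ → ℝ) (n : ℤ) : ℝ := u (n + 1) / u n

/-- `ρ_o(n) = −√(aₙ₊₁/φₙ)`. -/
noncomputable def rhoO (a u : ℤ → ℝ) (n : ℤ) : ℝ := -Real.sqrt (a (n + 1) / phiRatio u n)

/-- `ρ_e(n) = √(aₙ₊₁·φₙ)`. -/
noncomputable def rhoE (a u : ℤ → ℝ) (n : ℤ) : ℝ := Real.sqrt (a (n + 1) * phiRatio u n)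

/-- `(Af)ₙ = ρ_o(n)fₙ₊₁ + ρ_e(n)fₙ`. -/
noncomputable def opA (a u f : ℤ → ℝ) (n : ℤ) : ℝ := rhoO a u n * f (n + 1) + rhoE a u n * f n

/-- `(A*f)ₙ = ρ_o(n−1)fₙ₋₁ + ρ_e(n)fₙ`. -/
noncomputable def opAstar (a u f : ℤ → ℝ) (n : ℤ) : ℝ :=
  rhoO a u (n - 1) * f (n - 1) + rhoE a u n * f n

lemma phi_pos (u : ℤ → ℝ) (hupos : ∀ n, 0 < u n) (n : ℤ) : 0 < phiRatio u n :=
  div_pos (hupos _) (hupos _)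

lemma rhoO_mul_rhoE (a u : ℤ → ℝ) (ha : ∀ n, 0 < a n) (hupos : ∀ n, 0 < u n) (n : ℤ) :
    rhoO a u n * rhoE a u n = -a (n + 1) := by
  have hφ := phi_pos u hupos n
  have h1 : (0:ℝ) ≤ a (n + 1) / phiRatio u n := le_of_lt (div_pos (ha _) hφ)
  unfold rhoO rhoE
  rw [neg_mul, ← Real.sqrt_mul h1]
  have : a (n + 1) / phiRatio u n * (a (n + 1) * phiRatio u n) = a (n + 1) * a (n + 1) := by
    field_simp
  rw [this, Real.sqrt_mul_self (ha _).le]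

lemma rhoO_sq (a u : ℤ → ℝ) (ha : ∀ n, 0 < a n) (hupos : ∀ n, 0 < u n) (n : ℤ) :
    rhoO a u n * rhoO a u n = a (n + 1) * u n / u (n + 1) := by
  have hφ := phi_pos u hupos n
  have h1 : (0:ℝ) ≤ a (n + 1) / phiRatio u n := le_of_lt (div_pos (ha _) hφ)
  unfold rhoO
  rw [neg_mul_neg, Real.mul_self_sqrt h1, phiRatio, div_div_eq_mul_div]

lemma rhoE_sq (a u : ℤ → ℝ) (ha : ∀ n, 0 < a n) (hupos : ∀ n, 0 < u n) (n : ℤ) :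
    rhoE a u n * rhoE a u n = a (n + 1) * u (n + 1) / u n := by
  have hφ := phi_pos u hupos n
  unfold rhoE
  rw [Real.mul_self_sqrt (le_of_lt (mul_pos (ha _) hφ)), phiRatio, mul_div_assoc]

/-- Factorization `λ₁ − H_q = A*A` from a positive solution at energy `λ₁`. -/
theorem stmt4 (a b : ℤ → ℝ) (ha : ∀ n, 0 < a n) (lam1 : ℝ) (u : ℤ → ℝ)
    (hupos : ∀ n, 0 < u n)
    (hu : ∀ n : ℤ, a (n + 1) * u (n + 1) + a n * u (n - 1) + b n * u n = lam1 * u n)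
    (f : ℤ → ℝ) (n : ℤ) :
    opAstar a u (opA a u f) n =
      lam1 * f n - (a (n + 1) * f (n + 1) + a n * f (n - 1) + b n * f n) := by
  have hn : n - 1 + 1 = n := by ring
  have key := hu n
  have hun := (hupos n).ne'
  have hun1 := (hupos (n+1)).ne'
  have hun1' := (hupos (n-1)).ne'
  have h1 := rhoO_mul_rhoE a u ha hupos (n-1)
  have h2 := rhoO_mul_rhoE a u ha hupos n
  have h3 := rhoO_sq a u ha hupos (n-1)
  have h4 := rhoE_sq a u ha hupos n
  rw [hn] at h1 h3
  have h3' : rhoO a u (n-1) * rhoO a u (n-1) * u n = a n * u (n-1) := by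
    rw [h3]; field_simp
  have h4' : rhoE a u n * rhoE a u n * u n = a (n+1) * u (n+1) := by
    rw [h4]; field_simp
  unfold opAstar opA
  rw [hn]
  apply mul_right_cancel₀ hun
  linear_combination f n * h3' + f n * h4' + f (n-1) * u n * h1 + f (n+1) * u n * h2
    + f n * key
end

section
/- Let λ₀ > 2 and m ∈ M_{λ₀}. Then for all z and ζ in the upper half-plane with |z| > 1, |ζ| > 1, z ∉ Σ_{λ₀}, ζ ∉ Σ_{λ₀}, one has |(m(z) − conj(m(ζ)))/(φ(z) − conj(φ(ζ)))|² ≤ (Im m(ζ)/Im φ(ζ)) · (Im m(z)/Im φ(z)). -/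
open Complex Filter MeasureTheory

noncomputable def phi (z : ℂ) : ℂ := z + z⁻¹

noncomputable def ell (lam : ℝ) : ℝ := (lam + Real.sqrt (lam ^ 2 - 4)) / 2

/-- The set `Σ_{λ₀} = {|z| = 1} ∪ [−ℓ, −ℓ⁻¹] ∪ [ℓ⁻¹, ℓ]` (intervals regarded inside `ℂ`). -/
noncomputable def SigmaSet (lam : ℝ) : Set ℂ :=
  {z : ℂ | ‖z‖ = 1} ∪
    ((fun x : ℝ => (x : ℂ)) ''
      (Set.Icc (-(ell lam)) (-(ell lam)⁻¹) ∪ Set.Icc (ell lam)⁻¹ (ell lam)))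

/-- The class `M_{λ₀}` of `m`-functions: `m` is analytic on `ℂ \ Σ_{λ₀}`, satisfies
`m(conj z) = conj (m z)`, and (i) `m(z) − z → 0` at `∞` with `z(m(z) − z)` bounded near `∞`;
(ii) `Im m > 0` on the upper half-plane off `Σ_{λ₀}`; (iii) `m(z) ≠ m(z⁻¹)` there;
(iv) `m` is not a rational function of `z + z⁻¹`. -/
def MemM (lam : ℝ) (m : ℂ → ℂ) : Prop :=
  AnalyticOnNhd ℂ m (SigmaSet lam)ᶜ ∧
  (∀ z ∉ SigmaSet lam, m ((starRingEnd ℂ) z) = (starRingEnd ℂ) (m z)) ∧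
  Tendsto (fun z : ℂ => m z - z) (cocompact ℂ) (nhds 0) ∧
  (∃ C : ℝ, ∀ᶠ z : ℂ in cocompact ℂ, ‖z * (m z - z)‖ ≤ C) ∧
  (∀ z : ℂ, 0 < z.im → z ∉ SigmaSet lam → 0 < (m z).im) ∧
  (∀ z : ℂ, 0 < z.im → z ∉ SigmaSet lam → m z - m z⁻¹ ≠ 0) ∧
  ¬ ∃ P Q : Polynomial ℂ,
      (∃ z : ℂ, z ∉ SigmaSet lam ∧ Q.eval (phi z) ≠ 0) ∧
        ∀ z : ℂ, z ∉ SigmaSet lam → m z * Q.eval (phi z) = P.eval (phi z)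

/-- The transform `(d_ζ f)(z) = φ(z) − (f(ζ) − f(0))·(1 − (φ(z) − φ(ζ))/(f(z) − f(ζ)))`. -/
noncomputable def dT (f : ℂ → ℂ) (ζ : ℂ) (z : ℂ) : ℂ :=
  phi z - (f ζ - f 0) * (1 - (phi z - phi ζ) / (f z - f ζ))

namespace Aux17

noncomputable def psi (w : ℂ) : ℂ :=
  w / 2 * (1 + Complex.exp (Complex.log (1 - 4 / w ^ 2) / 2))

lemma ne_zero_of_im_pos {w : ℂ} (hw : 0 < w.im) : w ≠ 0 := by
  intro h; rw [h] at hw; simp at hw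

lemma q_slit {w : ℂ} (hw : 0 < w.im) : (1 - 4 / w ^ 2) ∈ Complex.slitPlane := by
  rw [Complex.mem_slitPlane_iff]
  by_contra hcon
  push_neg at hcon
  obtain ⟨hre, him⟩ := hcon
  have hw0 : w ≠ 0 := ne_zero_of_im_pos hw
  have hns : 0 < Complex.normSq (w ^ 2) := Complex.normSq_pos.mpr (pow_ne_zero _ hw0)
  have h1 : ((w ^ 2)⁻¹).im = 0 := by
    have e : (1 - 4 / w ^ 2).im = -(4 * ((w ^ 2)⁻¹).im) := by
      rw [div_eq_mul_inv, Complex.sub_im, Complex.one_im, Complex.mul_im]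
      simp
    rw [him] at e
    linarith
  have h2 : (w ^ 2).im = 0 := by
    rw [Complex.inv_im, neg_div, neg_eq_zero, div_eq_zero_iff] at h1
    rcases h1 with h | h
    · exact h
    · exact absurd h hns.ne'
  have hre0 : w.re = 0 := by
    have e : (w ^ 2).im = 2 * w.re * w.im := by rw [pow_two, Complex.mul_im]; ring
    nlinarith [hw]
  have hw2re : (w ^ 2).re = -(w.im ^ 2) := by rw [pow_two, Complex.mul_re, hre0]; ring
  have hnsval : Complex.normSq (w ^ 2) = w.im ^ 2 * w.im ^ 2 := by
    rw [Complex.normSq_apply, hw2re, h2]; ring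
  have him2 : (0:ℝ) < w.im ^ 2 := by positivity
  have hpos : 0 < (1 - 4 / w ^ 2).re := by
    rw [div_eq_mul_inv, Complex.sub_re, Complex.one_re, Complex.mul_re, Complex.inv_re,
      Complex.inv_im, h2, hw2re, hnsval]
    have hq : -(w.im ^ 2) / (w.im ^ 2 * w.im ^ 2) = -(1 / w.im ^ 2) := by
      field_simp
    rw [hq]
    have h9 : (0:ℝ) < (w.im ^ 2)⁻¹ := by positivity
    norm_num
    linarith
  linarith

lemma q_ne_zero {w : ℂ} (hw : 0 < w.im) : (1 - 4 / w ^ 2) ≠ 0 :=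
  Complex.slitPlane_ne_zero (q_slit hw)

lemma r_sq {w : ℂ} (hw : 0 < w.im) :
    (Complex.exp (Complex.log (1 - 4 / w ^ 2) / 2)) ^ 2 = 1 - 4 / w ^ 2 := by
  rw [pow_two, ← Complex.exp_add]
  have h : Complex.log (1 - 4 / w ^ 2) / 2 + Complex.log (1 - 4 / w ^ 2) / 2
      = Complex.log (1 - 4 / w ^ 2) := by ring
  rw [h, Complex.exp_log (q_ne_zero hw)]

lemma r_re_pos {w : ℂ} (hw : 0 < w.im) :
    0 < (Complex.exp (Complex.log (1 - 4 / w ^ 2) / 2)).re := by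
  rw [Complex.exp_re]
  apply mul_pos (Real.exp_pos _)
  have him : (Complex.log (1 - 4 / w ^ 2) / 2).im = (1 - 4 / w ^ 2).arg / 2 := by
    have h : (Complex.log (1 - 4 / w ^ 2) / 2).im
        = (Complex.log (1 - 4 / w ^ 2)).im / 2 := by
      have : (2:ℂ) = ((2:ℝ):ℂ) := by norm_num
      rw [this, Complex.div_ofReal_im]
    rw [h, Complex.log_im]
  rw [him]
  apply Real.cos_pos_of_mem_Ioo
  constructor
  · have := Complex.neg_pi_lt_arg (1 - 4 / w ^ 2)
    linarith
  · have h1 := Complex.arg_le_pi (1 - 4 / w ^ 2)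
    have h2 : (1 - 4 / w ^ 2).arg ≠ Real.pi := by
      intro h
      rw [Complex.arg_eq_pi_iff] at h
      have hs := q_slit hw
      rw [Complex.mem_slitPlane_iff] at hs
      rcases hs with h' | h'
      · linarith [h.1]
      · exact h' h.2
    have : (1 - 4 / w ^ 2).arg < Real.pi := lt_of_le_of_ne h1 h2
    linarith [Real.pi_pos]

lemma psi_mul {w : ℂ} (hw : 0 < w.im) : psi w * (w - psi w) = 1 := by
  have hw2 : w ^ 2 ≠ 0 := pow_ne_zero _ (ne_zero_of_im_pos hw)
  have hr := r_sq hw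
  have key : psi w * (w - psi w)
      = w ^ 2 * (1 - (Complex.exp (Complex.log (1 - 4 / w ^ 2) / 2)) ^ 2) / 4 := by
    unfold psi; ring
  rw [key, hr]
  rw [sub_sub_cancel]
  have hw0 : w ≠ 0 := ne_zero_of_im_pos hw
  field_simp

lemma psi_ne_zero {w : ℂ} (hw : 0 < w.im) : psi w ≠ 0 := by
  intro h
  have h2 := psi_mul hw
  rw [h] at h2; simp at h2

lemma sub_psi {w : ℂ} (hw : 0 < w.im) : w - psi w = (psi w)⁻¹ := by
  have h := psi_mul hw
  field_simp [psi_ne_zero hw]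
  linear_combination h

lemma phi_psi {w : ℂ} (hw : 0 < w.im) : phi (psi w) = w := by
  rw [phi, ← sub_psi hw]; ring

lemma abs_psi {w : ℂ} (hw : 0 < w.im) : 1 < ‖psi w‖ := by
  have hw0 : w ≠ 0 := ne_zero_of_im_pos hw
  set r := Complex.exp (Complex.log (1 - 4 / w ^ 2) / 2) with hrdef
  have hre := r_re_pos hw
  rw [← hrdef] at hre
  have h1 : Complex.normSq (1 - r) < Complex.normSq (1 + r) := by
    simp only [Complex.normSq_apply, Complex.add_re, Complex.add_im, Complex.sub_re,
      Complex.sub_im, Complex.one_re, Complex.one_im]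
    nlinarith
  have h2 : ‖1 - r‖ < ‖1 + r‖ := by
    rw [Complex.norm_def, Complex.norm_def]
    exact Real.sqrt_lt_sqrt (Complex.normSq_nonneg _) h1
  have hsub : w - psi w = w / 2 * (1 - r) := by
    unfold psi; rw [← hrdef]; ring
  have hpsi : psi w = w / 2 * (1 + r) := by unfold psi; rw [← hrdef]
  have habs : ‖w - psi w‖ < ‖psi w‖ := by
    rw [hsub, hpsi, norm_mul, norm_mul]
    have hpos : 0 < ‖w / 2‖ :=
      norm_pos_iff.mpr (div_ne_zero hw0 two_ne_zero)
    exact mul_lt_mul_of_pos_left h2 hpos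
  rw [sub_psi hw, norm_inv] at habs
  have hp : 0 < ‖psi w‖ := norm_pos_iff.mpr (psi_ne_zero hw)
  have hmul : (‖psi w‖)⁻¹ * ‖psi w‖ = 1 :=
    inv_mul_cancel₀ hp.ne'
  nlinarith [mul_lt_mul_of_pos_right habs hp, hmul, hp]

lemma im_psi {w : ℂ} (hw : 0 < w.im) : 0 < (psi w).im := by
  have h := phi_psi hw
  have hp : 0 < ‖psi w‖ := norm_pos_iff.mpr (psi_ne_zero hw)
  have hns : 1 < Complex.normSq (psi w) := by
    have h2 := abs_psi hw
    rw [← Complex.sq_norm]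
    nlinarith
  have hns0 : Complex.normSq (psi w) ≠ 0 := by positivity
  have him : w.im = (psi w).im * (1 - (Complex.normSq (psi w))⁻¹) := by
    conv_lhs => rw [← h]
    rw [phi, Complex.add_im, Complex.inv_im]
    field_simp
    ring
  have hpos : 0 < 1 - (Complex.normSq (psi w))⁻¹ := by
    have h3 : (Complex.normSq (psi w))⁻¹ < 1 := by
      rw [inv_lt_one_iff₀]; right; exact hns
    linarith
  nlinarith [hw, him, hpos]

lemma psi_phi {z : ℂ} (hz : 0 < z.im) (hzabs : 1 < ‖z‖) : psi (phi z) = z := by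
  have hz0 : z ≠ 0 := ne_zero_of_im_pos hz
  have hnsz : 1 < Complex.normSq z := by
    rw [← Complex.sq_norm]; nlinarith [norm_nonneg z]
  have hns0 : 0 < Complex.normSq z := by linarith
  have hφ : 0 < (phi z).im := by
    rw [phi, Complex.add_im, Complex.inv_im]
    have h4 : (Complex.normSq z)⁻¹ < 1 := by
      rw [inv_lt_one_iff₀]; right; exact hnsz
    have h5 : -z.im / Complex.normSq z = -(z.im * (Complex.normSq z)⁻¹) := by
      field_simp
    rw [h5]
    nlinarith [inv_pos.mpr hns0]
  set a := psi (phi z) with ha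
  have ha0 : a ≠ 0 := psi_ne_zero hφ
  have haphi : phi a = phi z := phi_psi hφ
  have key : (a - z) * (a * z - 1) = 0 := by
    rw [phi, phi] at haphi
    field_simp at haphi
    linear_combination haphi
  rcases mul_eq_zero.mp key with h | h
  · exact sub_eq_zero.mp h
  · exfalso
    have haz : a * z = 1 := by
      have h7 := sub_eq_zero.mp h
      exact h7
    have habs : ‖a‖ * ‖z‖ = 1 := by
      rw [← norm_mul, haz, norm_one]
    have h8 := abs_psi hφ
    rw [← ha] at h8
    nlinarith


lemma im_phi_pos {z : ℂ} (hz : 0 < z.im) (hzabs : 1 < ‖z‖) : 0 < (phi z).im := by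
  have hnsz : 1 < Complex.normSq z := by
    rw [← Complex.sq_norm]; nlinarith [norm_nonneg z]
  have hns0 : 0 < Complex.normSq z := by linarith
  rw [phi, Complex.add_im, Complex.inv_im]
  have h4 : (Complex.normSq z)⁻¹ < 1 := by
    rw [inv_lt_one_iff₀]; right; exact hnsz
  have h5 : -z.im / Complex.normSq z = -(z.im * (Complex.normSq z)⁻¹) := by
    field_simp
  rw [h5]
  nlinarith [inv_pos.mpr hns0]



lemma ident (x y : ℂ) :
    (‖x - (starRingEnd ℂ) y‖) ^ 2 - (‖x - y‖) ^ 2 = 4 * x.im * y.im := by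
  rw [Complex.sq_norm, Complex.sq_norm]
  simp [Complex.normSq_apply, Complex.sub_re, Complex.sub_im, Complex.conj_re, Complex.conj_im]
  ring

lemma sub_conj_ne {v B : ℂ} (hv : 0 < v.im) (hB : 0 < B.im) : v - (starRingEnd ℂ) B ≠ 0 := by
  intro h
  have h2 : (v - (starRingEnd ℂ) B).im = 0 := by rw [h]; simp
  simp [Complex.sub_im, Complex.conj_im] at h2
  linarith

lemma cayley {v B : ℂ} (hv : 0 < v.im) (hB : 0 < B.im) :
    ‖(v - B) / (v - (starRingEnd ℂ) B)‖ < 1 := by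
  rw [norm_div, div_lt_one (norm_pos_iff.mpr (sub_conj_ne hv hB))]
  have h : Complex.normSq (v - B) < Complex.normSq (v - (starRingEnd ℂ) B) := by
    simp [Complex.normSq_apply, Complex.sub_re, Complex.sub_im, Complex.conj_re, Complex.conj_im]
    nlinarith
  rw [Complex.norm_def, Complex.norm_def]
  exact Real.sqrt_lt_sqrt (Complex.normSq_nonneg _) h

lemma one_sub_ne {u : ℂ} (hu : ‖u‖ < 1) : (1 : ℂ) - u ≠ 0 := by
  intro h
  have h2 : u = 1 := by linear_combination -h
  rw [h2] at hu
  simp at hu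

lemma g_im {w u : ℂ} (hw : 0 < w.im) (hu : ‖u‖ < 1) :
    0 < ((w - (starRingEnd ℂ) w * u) / (1 - u)).im := by
  have h1u : (1 : ℂ) - u ≠ 0 := one_sub_ne hu
  have hns : 0 < Complex.normSq (1 - u) := Complex.normSq_pos.mpr h1u
  have hnsu : Complex.normSq u < 1 := by
    rw [← Complex.sq_norm]; nlinarith [norm_nonneg u]
  have key : (w - (starRingEnd ℂ) w * u).im * (1 - u).re
      - (w - (starRingEnd ℂ) w * u).re * (1 - u).im = w.im * (1 - Complex.normSq u) := by
    simp [Complex.sub_re, Complex.sub_im, Complex.mul_re, Complex.mul_im,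
      Complex.conj_re, Complex.conj_im, Complex.normSq_apply]
    ring
  rw [Complex.div_im, div_sub_div_same, key]
  exact div_pos (mul_pos hw (by linarith)) hns

lemma not_mem_sigma {lam : ℝ} {x : ℂ} (hx : 0 < x.im) (hxabs : 1 < ‖x‖) :
    x ∉ SigmaSet lam := by
  intro h
  rcases h with h | h
  · rw [Set.mem_setOf_eq] at h; linarith
  · obtain ⟨t, _, ht⟩ := h
    rw [← ht] at hx
    simp at hx

lemma psi_diff {w : ℂ} (hw : 0 < w.im) : DifferentiableAt ℂ psi w := by
  have hw0 : w ≠ 0 := ne_zero_of_im_pos hw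
  have hq : DifferentiableAt ℂ (fun w : ℂ => 1 - 4 / w ^ 2) w := by
    apply DifferentiableAt.sub (differentiableAt_const _)
    exact (differentiableAt_const _).div (differentiableAt_id.pow 2) (pow_ne_zero _ hw0)
  have hexp : DifferentiableAt ℂ
      (fun w : ℂ => Complex.exp (Complex.log (1 - 4 / w ^ 2) / 2)) w :=
    ((hq.clog (q_slit hw)).div_const 2).cexp
  unfold psi
  exact (differentiableAt_id.div_const 2).mul ((differentiableAt_const 1).add hexp)

end Aux17

/-- Cauchy–Schwarz bound for `m ∈ M_{λ₀}` on the region `Im z > 0`, `|z| > 1`: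
`|(m(z) − conj m(ζ))/(φ(z) − conj φ(ζ))|² ≤ (Im m(ζ)/Im φ(ζ))·(Im m(z)/Im φ(z))`. -/
theorem stmt17 (lam : ℝ) (hlam : 2 < lam) (m : ℂ → ℂ) (hm : MemM lam m)
    (z : ℂ) (hz : 0 < z.im) (hzabs : 1 < ‖z‖) (hzS : z ∉ SigmaSet lam)
    (ζ : ℂ) (hζ : 0 < ζ.im) (hζabs : 1 < ‖ζ‖) (hζS : ζ ∉ SigmaSet lam) :
    ‖(m z - (starRingEnd ℂ) (m ζ)) / (phi z - (starRingEnd ℂ) (phi ζ))‖ ^ 2 ≤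
      ((m ζ).im / (phi ζ).im) * ((m z).im / (phi z).im) := by
  obtain ⟨hman, -, -, -, hmim, -, -⟩ := hm
  have hw1 : 0 < (phi z).im := Aux17.im_phi_pos hz hzabs
  have hw2 : 0 < (phi ζ).im := Aux17.im_phi_pos hζ hζabs
  have hA : 0 < (m z).im := hmim z hz hzS
  have hB : 0 < (m ζ).im := hmim ζ hζ hζS
  set w₁ : ℂ := phi z with hw₁def
  set w₂ : ℂ := phi ζ with hw₂def
  set A : ℂ := m z with hAdef
  set B : ℂ := m ζ with hBdef
  set g : ℂ → ℂ := fun u => (w₂ - (starRingEnd ℂ) w₂ * u) / (1 - u) with hgdef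
  set F : ℂ → ℂ :=
    fun u => (m (Aux17.psi (g u)) - B) / (m (Aux17.psi (g u)) - (starRingEnd ℂ) B) with hFdef
  -- basic facts about points of the unit ball
  have hgim : ∀ u : ℂ, ‖u‖ < 1 → 0 < (g u).im := fun u hu => Aux17.g_im hw2 hu
  have hpsiim : ∀ u : ℂ, ‖u‖ < 1 → 0 < (Aux17.psi (g u)).im :=
    fun u hu => Aux17.im_psi (hgim u hu)
  have hpsiabs : ∀ u : ℂ, ‖u‖ < 1 → 1 < ‖Aux17.psi (g u)‖ :=
    fun u hu => Aux17.abs_psi (hgim u hu)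
  have hpsiS : ∀ u : ℂ, ‖u‖ < 1 → Aux17.psi (g u) ∉ SigmaSet lam :=
    fun u hu => Aux17.not_mem_sigma (hpsiim u hu) (hpsiabs u hu)
  have hvim : ∀ u : ℂ, ‖u‖ < 1 → 0 < (m (Aux17.psi (g u))).im :=
    fun u hu => hmim _ (hpsiim u hu) (hpsiS u hu)
  -- differentiability
  have hdiff : DifferentiableOn ℂ F (Metric.ball 0 1) := by
    intro u hu
    rw [Metric.mem_ball, dist_zero_right] at hu
    have hu' : ‖u‖ < 1 := by exact hu
    have h1u : (1 : ℂ) - u ≠ 0 := Aux17.one_sub_ne hu'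
    have hgd : DifferentiableAt ℂ g u := by
      apply DifferentiableAt.div
      · exact (differentiableAt_const _).sub ((differentiableAt_const _).mul differentiableAt_id)
      · exact (differentiableAt_const _).sub differentiableAt_id
      · exact h1u
    have hpsid : DifferentiableAt ℂ (fun u => Aux17.psi (g u)) u :=
      (Aux17.psi_diff (hgim u hu')).comp u hgd
    have hmd : DifferentiableAt ℂ (fun u => m (Aux17.psi (g u))) u :=
      ((hman _ (hpsiS u hu')).differentiableAt).comp u hpsid
    have hden : m (Aux17.psi (g u)) - (starRingEnd ℂ) B ≠ 0 :=
      Aux17.sub_conj_ne (hvim u hu') hB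
    exact ((hmd.sub (differentiableAt_const _)).div
      (hmd.sub (differentiableAt_const _)) hden).differentiableWithinAt
  have hmaps : Set.MapsTo F (Metric.ball 0 1) (Metric.ball 0 1) := by
    intro u hu
    rw [Metric.mem_ball, dist_zero_right] at hu ⊢
    have hu' : ‖u‖ < 1 := by exact hu
    exact Aux17.cayley (hvim u hu') hB
  have hF0 : F 0 = 0 := by
    have hg0 : g 0 = w₂ := by
      rw [hgdef]; simp
    rw [hFdef]
    simp only [hg0, hw₂def]
    rw [Aux17.psi_phi hζ hζabs, ← hBdef, sub_self, zero_div]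
  set u₁ : ℂ := (w₁ - w₂) / (w₁ - (starRingEnd ℂ) w₂) with hu₁def
  have hu₁ : ‖u₁‖ < 1 := Aux17.cayley hw1 hw2
  have hden12 : w₁ - (starRingEnd ℂ) w₂ ≠ 0 := Aux17.sub_conj_ne hw1 hw2
  have hconj2 : w₂ - (starRingEnd ℂ) w₂ ≠ 0 := by
    intro h
    have h2 : (w₂ - (starRingEnd ℂ) w₂).im = 0 := by rw [h]; simp
    simp [Complex.sub_im, Complex.conj_im] at h2
    linarith
  have h1u₁ : (1 : ℂ) - u₁ ≠ 0 := Aux17.one_sub_ne hu₁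
  have hgu₁ : g u₁ = w₁ := by
    rw [hgdef]
    simp only
    rw [div_eq_iff h1u₁, hu₁def]
    field_simp
    ring
  have hFu₁ : F u₁ = (A - B) / (A - (starRingEnd ℂ) B) := by
    rw [hFdef]
    simp only [hgu₁, hw₁def]
    rw [Aux17.psi_phi hz hzabs, ← hAdef]
  have hSchwarz := Complex.norm_le_norm_of_mapsTo_ball hdiff (hmaps.mono_right Metric.ball_subset_closedBall) hF0 hu₁
  rw [hFu₁, hu₁def, norm_div, norm_div] at hSchwarz
  -- final algebra
  have hbne : A - (starRingEnd ℂ) B ≠ 0 := Aux17.sub_conj_ne hA hB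
  have hb : 0 < ‖A - (starRingEnd ℂ) B‖ := norm_pos_iff.mpr hbne
  have hd : 0 < ‖w₁ - (starRingEnd ℂ) w₂‖ := norm_pos_iff.mpr hden12
  have hSP : ‖A - B‖ * ‖w₁ - (starRingEnd ℂ) w₂‖
      ≤ ‖w₁ - w₂‖ * ‖A - (starRingEnd ℂ) B‖ :=
    (div_le_div_iff₀ hb hd).mp hSchwarz
  have hid1 := Aux17.ident A B
  have hid2 := Aux17.ident w₁ w₂
  rw [norm_div, div_pow, div_mul_div_comm,
    div_le_div_iff₀ (pow_pos hd 2) (mul_pos hw2 hw1)]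
  have hsq : (‖A - B‖ * ‖w₁ - (starRingEnd ℂ) w₂‖) ^ 2
      ≤ (‖w₁ - w₂‖ * ‖A - (starRingEnd ℂ) B‖) ^ 2 := by
    apply pow_le_pow_left₀ (by positivity) hSP
  nlinarith [hsq, hid1, hid2, norm_nonneg (A - B), norm_nonneg (w₁ - w₂),
    sq_nonneg (‖A - B‖), sq_nonneg (‖w₁ - w₂‖), hb, hd]
end
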